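/- Let P be a bichromatic point set of points lying on a circle, and let 2k be the number of indices (in the cyclic order along the circle) at which two consecutive points have different colors. Then any family of pairwise disjoint closed triangles such that every point of P is contained in some triangle and no triangle contains points of both colors has size at least k + 1 (for k ≥ 0 and P nonempty). -/

import Mathlib

abbrev Pt := ℝ × ℝ

open Real in
private def pcross (u v : Pt) : ℝ := u.1 * v.2 - u.2 * v.1

open Real in
private lemma trig3 (x y z : ℝ) :
    (cos z - cos x) * (sin y - sin x) - (sin z - sin x) * (cos y - cos x)
      = -4 * sin ((y-x)/2) * sin ((z-y)/2) * sin ((z-x)/2) := by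
  have hs : sin ((z - y)/2) = sin ((z+x)/2) * cos ((y+x)/2) - cos ((z+x)/2) * sin ((y+x)/2) := by
    rw [← Real.sin_sub]; ring_nf
  rw [Real.cos_sub_cos, Real.sin_sub_sin, Real.sin_sub_sin, Real.cos_sub_cos, hs]
  ring

open Real in
private lemma crossQ (o : Pt) (ρ : ℝ) (x y z : ℝ) :
    pcross ((o + ρ • (cos z, sin z)) - (o + ρ • (cos x, sin x)))
          ((o + ρ • (cos y, sin y)) - (o + ρ • (cos x, sin x)))
      = ρ^2 * (-4 * sin ((y-x)/2) * sin ((z-y)/2) * sin ((z-x)/2)) := by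
  have h := trig3 x y z
  simp only [pcross, Prod.fst_sub, Prod.snd_sub, Prod.fst_add, Prod.snd_add,
    Prod.smul_fst, Prod.smul_snd, smul_eq_mul]
  nlinarith [h]

private lemma seg_cross {A B C D : Pt}
    (hY : pcross (C-A) (B-A) < 0) (hXY : 0 < pcross (C-A) (D-A))
    (hZ : 0 < pcross (D-B) (A-B)) (hXZ : pcross (D-B) (C-B) < 0) :
    ∃ p, p ∈ segment ℝ A C ∧ p ∈ segment ℝ B D := by
  set X := pcross (C-A) (D-B) with hX
  set Y := pcross (C-A) (B-A) with hYdef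
  set Z := pcross (D-B) (B-A) with hZdef
  have e1 : pcross (C-A) (D-A) = X + Y := by
    simp only [hX, hYdef, pcross, Prod.fst_sub, Prod.snd_sub]; ring
  have e2 : pcross (D-B) (A-B) = -Z := by
    simp only [hZdef, pcross, Prod.fst_sub, Prod.snd_sub]; ring
  have e3 : pcross (D-B) (C-B) = -X - Z := by
    simp only [hX, hZdef, pcross, Prod.fst_sub, Prod.snd_sub]; ring
  rw [e1] at hXY
  rw [e2] at hZ
  rw [e3] at hXZ
  have hZ' : Z < 0 := by linarith
  have hXZ' : 0 < X + Z := by linarith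
  have hXpos : 0 < X := by linarith
  set s := -Z/X with hs
  set tt := -Y/X with ht
  have hs0 : 0 ≤ s := div_nonneg (by linarith) hXpos.le
  have hs1 : s ≤ 1 := by rw [hs, div_le_one hXpos]; linarith
  have ht0 : 0 ≤ tt := div_nonneg (by linarith) hXpos.le
  have ht1 : tt ≤ 1 := by rw [ht, div_le_one hXpos]; linarith
  refine ⟨A + s • (C - A), ?_, ?_⟩
  · exact ⟨1 - s, s, by linarith, hs0, by ring, by module⟩
  · have hX0 : X ≠ 0 := ne_of_gt hXpos
    have key : A + s • (C - A) = B + tt • (D - B) := by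
      apply Prod.ext
      · show A.1 + s * (C - A).1 = B.1 + tt * (D - B).1
        rw [hs, ht]
        field_simp
        simp only [hX, hYdef, hZdef, pcross, Prod.fst_sub, Prod.snd_sub]
        ring
      · show A.2 + s * (C - A).2 = B.2 + tt * (D - B).2
        rw [hs, ht]
        field_simp
        simp only [hX, hYdef, hZdef, pcross, Prod.fst_sub, Prod.snd_sub]
        ring
    rw [key]
    exact ⟨1 - tt, tt, by linarith, ht0, by ring, by module⟩

open Real in
private lemma circle_cross (o : Pt) (ρ : ℝ) (hρ : 0 < ρ) (α β γ δ : ℝ)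
    (h1 : α < β) (h2 : β < γ) (h3 : γ < δ) (h4 : δ - α < 2*π) :
    ∃ p, p ∈ segment ℝ (o+ρ•(cos α,sin α)) (o+ρ•(cos γ,sin γ)) ∧
         p ∈ segment ℝ (o+ρ•(cos β,sin β)) (o+ρ•(cos δ,sin δ)) := by
  have sp : ∀ a b : ℝ, a < b → b - a < 2*π → 0 < sin ((b-a)/2) := by
    intro a b h h'
    have hπ := Real.pi_pos
    exact Real.sin_pos_of_pos_of_lt_pi (by linarith) (by linarith)
  have p1 := sp α β h1 (by linarith)
  have p2 := sp β γ h2 (by linarith)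
  have p3 := sp α γ (by linarith) (by linarith)
  have p4 := sp α δ (by linarith) (by linarith)
  have p5 := sp γ δ h3 (by linarith)
  have p6 := sp β δ (by linarith) (by linarith)
  have hρ2 : 0 < ρ^2 := by positivity
  apply seg_cross
  · rw [crossQ o ρ α β γ]; nlinarith [mul_pos (mul_pos (mul_pos hρ2 p1) p2) p3]
  · rw [crossQ o ρ α δ γ]
    rw [show (γ-δ)/2 = -((δ-γ)/2) by ring, Real.sin_neg]
    nlinarith [mul_pos (mul_pos (mul_pos hρ2 p4) p5) p3]
  · rw [crossQ o ρ β α δ]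
    rw [show (α-β)/2 = -((β-α)/2) by ring, Real.sin_neg]
    nlinarith [mul_pos (mul_pos (mul_pos hρ2 p1) p4) p6]
  · rw [crossQ o ρ β γ δ]; nlinarith [mul_pos (mul_pos (mul_pos hρ2 p2) p5) p6]

/-- For bichromatic points `q 0, …, q (N-1)` in cyclic order on a circle with `2k` color changes
between cyclically consecutive points, any family of pairwise disjoint closed triangles covering
all points, with no triangle containing points of both colors, has size at least `k + 1`. -/
theorem stmt9 (N k : ℕ) [NeZero N] (o : Pt) (ρ : ℝ) (hρ : 0 < ρ)
    (θ : Fin N → ℝ) (hmono : StrictMono θ)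
    (hrange : ∀ i, θ i ∈ Set.Ico 0 (2 * Real.pi))
    (q : Fin N → Pt)
    (hq : ∀ i, q i = o + ρ • (Real.cos (θ i), Real.sin (θ i)))
    (c : Fin N → Bool)
    (hk : 2 * k = (Finset.univ.filter (fun i : Fin N => c i ≠ c (i + 1))).card)
    (T : Finset (Finset Pt))
    (htri : ∀ s ∈ T, s.Nonempty ∧ s.card ≤ 3)
    (hdisj : ∀ s ∈ T, ∀ s' ∈ T, s ≠ s' →
      Disjoint (convexHull ℝ (↑s : Set Pt)) (convexHull ℝ (↑s' : Set Pt)))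
    (hcover : ∀ i : Fin N, ∃ s ∈ T, q i ∈ convexHull ℝ (↑s : Set Pt))
    (hmonochrome : ∀ s ∈ T, ∀ i j : Fin N,
      q i ∈ convexHull ℝ (↑s : Set Pt) → q j ∈ convexHull ℝ (↑s : Set Pt) → c i = c j) :
    k + 1 ≤ T.card := by
  classical
  have hNpos : 0 < N := Nat.pos_of_ne_zero (NeZero.ne N)
  choose t hT hqt using hcover
  set m := (Finset.univ.image t).card with hm
  have hmT : m ≤ T.card := by
    apply Finset.card_le_card
    intro s hs
    rcases Finset.mem_image.mp hs with ⟨i, _, rfl⟩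
    exact hT i
  have hm1 : 1 ≤ m :=
    Finset.card_pos.mpr ⟨t ⟨0, hNpos⟩, Finset.mem_image_of_mem t (Finset.mem_univ _)⟩
  rcases Nat.eq_zero_or_pos k with rfl | hkpos
  · omega
  -- k ≥ 1, so there is a color change, hence N ≥ 2
  have hCBpos : 0 < (Finset.univ.filter (fun i : Fin N => c i ≠ c (i + 1))).card := by omega
  obtain ⟨i0, hi0⟩ := Finset.card_pos.mp hCBpos
  have hi0' : c i0 ≠ c (i0 + 1) := by simpa using hi0
  have hN2 : 2 ≤ N := by
    by_contra h
    have hN1 : N = 1 := by omega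
    apply hi0'
    congr 1
    subst hN1
    exact Subsingleton.elim _ _
  -- non-crossing property
  have noncross : ∀ a b c' d : Fin N, a < b → b < c' → c' < d →
      t a = t c' → t b = t d → t a = t b := by
    intro a b c' d hab hbc hcd h1 h2
    by_contra hne
    have hd := hdisj (t a) (hT a) (t b) (hT b) hne
    obtain ⟨p, hp1, hp2⟩ := circle_cross o ρ hρ (θ a) (θ b) (θ c') (θ d)
      (hmono hab) (hmono hbc) (hmono hcd)
      (by have := (hrange a).1; have := (hrange d).2; linarith)
    have hqa : q a ∈ convexHull ℝ (↑(t a) : Set Pt) := hqt a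
    have hqc : q c' ∈ convexHull ℝ (↑(t a) : Set Pt) := h1 ▸ hqt c'
    have hqb : q b ∈ convexHull ℝ (↑(t b) : Set Pt) := hqt b
    have hqd : q d ∈ convexHull ℝ (↑(t b) : Set Pt) := h2 ▸ hqt d
    rw [hq a] at hqa; rw [hq c'] at hqc; rw [hq b] at hqb; rw [hq d] at hqd
    have hpa : p ∈ convexHull ℝ (↑(t a) : Set Pt) :=
      (convex_convexHull ℝ _).segment_subset hqa hqc hp1
    have hpb : p ∈ convexHull ℝ (↑(t b) : Set Pt) :=
      (convex_convexHull ℝ _).segment_subset hqb hqd hp2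
    exact Set.disjoint_left.mp hd hpa hpb
  -- index of the last point
  set L : Fin N := ⟨N - 1, by omega⟩ with hL
  have hLval : L.val = N - 1 := rfl
  have hsucc : ∀ i : Fin N, i ≠ L → (i + 1).val = i.val + 1 := by
    intro i hiL
    have hne : i.val ≠ N - 1 := fun h => hiL (Fin.ext (h.trans hLval.symm))
    have hv : i.val + 1 < N := by
      have := i.isLt
      omega
    have h1 : (1 : Fin N).val = 1 := by
      rw [Fin.val_one']; exact Nat.mod_eq_of_lt (by omega)
    rw [Fin.val_add, h1, Nat.mod_eq_of_lt hv]
  -- triangle boundaries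
  set TB := Finset.univ.filter (fun i : Fin N => t i ≠ t (i + 1)) with hTB
  have hCBTB : (Finset.univ.filter (fun i : Fin N => c i ≠ c (i + 1))) ⊆ TB := by
    intro i hi
    rw [Finset.mem_filter] at hi
    rw [hTB, Finset.mem_filter]
    exact ⟨Finset.mem_univ _,
      fun he => hi.2 (hmonochrome (t i) (hT i) i (i + 1) (hqt i) (he ▸ hqt (i + 1)))⟩
  have h2k : 2 * k ≤ TB.card := hk ▸ Finset.card_le_card hCBTB
  -- boundary lemma
  have boundary : ∀ i : Fin N, i ≠ L → t i ≠ t (i + 1) →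
      (∀ j, t j = t (i + 1) → i + 1 ≤ j) ∨ (∀ j, t j = t i → j ≤ i) := by
    intro i hiL hti
    by_contra h
    push_neg at h
    obtain ⟨⟨j, hj1, hj2⟩, ⟨l, hl1, hl2⟩⟩ := h
    have hv : (i + 1).val = i.val + 1 := hsucc i hiL
    have hji : j < i := by
      have : j.val < i.val + 1 := by rw [← hv]; exact hj2
      have hjne : j ≠ i := fun h => hti (h ▸ hj1 : t i = t (i+1))
      have : j.val ≠ i.val := fun h => hjne (Fin.ext h)
      exact Fin.lt_def.mpr (by omega)
    have hil : i < l := hl2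
    have hl3 : i + 1 < l := by
      have : l ≠ i + 1 := fun h => hti ((h ▸ hl1 : t (i+1) = t i).symm)
      have : l.val ≠ i.val + 1 := fun h => this (Fin.ext (by rw [hv, h]))
      have : i.val < l.val := hil
      apply Fin.lt_def.mpr
      rw [hv]
      omega
    have := noncross j i (i + 1) l hji (Fin.lt_def.mpr (by rw [hv]; omega)) hl3 hj1 hl1.symm
    exact hti (this.symm.trans hj1)
  -- the two injections
  set S1 := TB.filter (fun i => i ≠ L ∧ ∀ j, t j = t (i + 1) → i + 1 ≤ j) with hS1
  set S2 := TB.filter (fun i => i ≠ L ∧ ∀ j, t j = t i → j ≤ i) with hS2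
  have hsub : TB ⊆ S1 ∪ S2 ∪ {L} := by
    intro i hi
    by_cases hiL : i = L
    · exact Finset.mem_union_right _ (by simp [hiL])
    · have hti : t i ≠ t (i + 1) := by
        simpa [hTB] using hi
      rcases boundary i hiL hti with hb | hb
      · exact Finset.mem_union_left _ (Finset.mem_union_left _
          (Finset.mem_filter.mpr ⟨hi, hiL, hb⟩))
      · exact Finset.mem_union_left _ (Finset.mem_union_right _
          (Finset.mem_filter.mpr ⟨hi, hiL, hb⟩))
  have hzero : (⟨0, hNpos⟩ : Fin N) ∈ Finset.univ := Finset.mem_univ _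
  have hS1card : S1.card ≤ m - 1 := by
    have : S1.card ≤ ((Finset.univ.image t).erase (t ⟨0, hNpos⟩)).card := by
      apply Finset.card_le_card_of_injOn (fun i => t (i + 1))
      · intro i hi
        simp only [hS1, Finset.mem_coe, Finset.mem_filter] at hi
        obtain ⟨_, hiL, hfirst⟩ := hi
        apply Finset.mem_erase.mpr
        constructor
        · intro he
          have h0 := hfirst ⟨0, hNpos⟩ he.symm
          have hv : (i + 1).val = i.val + 1 := hsucc i hiL
          have h0' : (i + 1).val ≤ (⟨0, hNpos⟩ : Fin N).val := Fin.le_def.mp h0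
          simp only [hv] at h0'
          omega
        · exact Finset.mem_image_of_mem t (Finset.mem_univ _)
      · intro i hi i' hi' he
        simp only [hS1, Finset.mem_filter, Finset.coe_filter, Set.mem_setOf_eq] at hi hi'
        obtain ⟨_, hiL, hfirst⟩ := hi
        obtain ⟨_, hiL', hfirst'⟩ := hi'
        have h1 := hfirst (i' + 1) he.symm
        have h2 := hfirst' (i + 1) he
        have h3 : i + 1 = i' + 1 := le_antisymm h1 h2
        have hv : (i + 1).val = i.val + 1 := hsucc i hiL
        have hv' : (i' + 1).val = i'.val + 1 := hsucc i' hiL'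
        apply Fin.ext
        have := congrArg Fin.val h3
        rw [hv, hv'] at this
        omega
    rwa [Finset.card_erase_of_mem (Finset.mem_image_of_mem t (Finset.mem_univ _))] at this
  have hS2card : S2.card ≤ m - 1 := by
    have : S2.card ≤ ((Finset.univ.image t).erase (t L)).card := by
      apply Finset.card_le_card_of_injOn (fun i => t i)
      · intro i hi
        simp only [hS2, Finset.mem_coe, Finset.mem_filter] at hi
        obtain ⟨_, hiL, hlast⟩ := hi
        apply Finset.mem_erase.mpr
        constructor
        · intro he
          have h0 : L ≤ i := hlast L he.symm
          have h0' : i ≤ L := by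
            apply Fin.le_def.mpr
            rw [hLval]
            have := i.isLt
            omega
          exact hiL (le_antisymm h0' h0)
        · exact Finset.mem_image_of_mem t (Finset.mem_univ _)
      · intro i hi i' hi' he
        simp only [hS2, Finset.mem_filter, Finset.coe_filter, Set.mem_setOf_eq] at hi hi'
        obtain ⟨_, hiL, hlast⟩ := hi
        obtain ⟨_, hiL', hlast'⟩ := hi'
        exact le_antisymm (hlast' i he) (hlast i' he.symm)
    rwa [Finset.card_erase_of_mem (Finset.mem_image_of_mem t (Finset.mem_univ _))] at this
  have hTBcard : TB.card ≤ (m - 1) + (m - 1) + 1 := by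
    calc TB.card ≤ (S1 ∪ S2 ∪ {L}).card := Finset.card_le_card hsub
    _ ≤ (S1 ∪ S2).card + ({L} : Finset (Fin N)).card := Finset.card_union_le _ _
    _ ≤ S1.card + S2.card + 1 := by
        have := Finset.card_union_le S1 S2
        simp only [Finset.card_singleton]
        omega
    _ ≤ (m - 1) + (m - 1) + 1 := by omega
  omega
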